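/- For an additive functor F : A → B between small preadditive categories, a contravariant additive functor T on A, and a covariant additive functor S on B, there is a natural isomorphism (F_* T) ⊗_B S ≅ T ⊗_A (F* S). -/

import Mathlib

open CategoryTheory Opposite
open scoped TensorProduct DirectSum

/-- The subgroup of relations defining the coend tensor product `T ⊗_C S`. -/
noncomputable def tensorRel {C : Type} [SmallCategory C] [Preadditive C] [DecidableEq C]
    (T : Cᵒᵖ ⥤ AddCommGrpCat) (S : C ⥤ AddCommGrpCat) :
    AddSubgroup (⨁ a : C, TensorProduct ℤ (T.obj (op a)) (S.obj a)) :=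
  AddSubgroup.closure
    {z | ∃ (a a' : C) (α : a ⟶ a') (x : T.obj (op a')) (y : S.obj a),
      z = DirectSum.of (fun b : C => TensorProduct ℤ (T.obj (op b)) (S.obj b)) a
            (T.map α.op x ⊗ₜ[ℤ] y)
        - DirectSum.of (fun b : C => TensorProduct ℤ (T.obj (op b)) (S.obj b)) a'
            (x ⊗ₜ[ℤ] S.map α y)}

/-- The coend tensor product `T ⊗_C S` of a contravariant and a covariant additive functor. -/
noncomputable def functorTensor {C : Type} [SmallCategory C] [Preadditive C] [DecidableEq C]
    (T : Cᵒᵖ ⥤ AddCommGrpCat) (S : C ⥤ AddCommGrpCat) : Type :=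
  (⨁ a : C, TensorProduct ℤ (T.obj (op a)) (S.obj a)) ⧸ tensorRel T S

noncomputable instance {C : Type} [SmallCategory C] [Preadditive C] [DecidableEq C]
    (T : Cᵒᵖ ⥤ AddCommGrpCat) (S : C ⥤ AddCommGrpCat) : AddCommGroup (functorTensor T S) :=
  inferInstanceAs
    (AddCommGroup ((⨁ a : C, TensorProduct ℤ (T.obj (op a)) (S.obj a)) ⧸ tensorRel T S))

/-- Restriction along an additive functor `F : A ⥤ B` on categories of contravariant additive
functors: `F* U = U ∘ F`. -/
def restrictAdditive {A B : Type} [SmallCategory A] [SmallCategory B]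
    [Preadditive A] [Preadditive B] (F : A ⥤ B) [F.Additive] :
    (Bᵒᵖ ⥤+ AddCommGrpCat) ⥤ (Aᵒᵖ ⥤+ AddCommGrpCat) :=
  ObjectProperty.lift _
    (AdditiveFunctor.forget _ _ ⋙ (Functor.whiskeringLeft Aᵒᵖ Bᵒᵖ AddCommGrpCat).obj F.op)
    (fun U => inferInstanceAs (Functor.Additive (F.op ⋙ U.obj)))

section HomFunctor
variable {C : Type} [SmallCategory C] [Preadditive C]

/-- The functor `a ↦ (S a →+ M)`. -/
def homFunctor (S : C ⥤ AddCommGrpCat) (M : Type) [AddCommGroup M] : Cᵒᵖ ⥤ AddCommGrpCat where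
  obj b := AddCommGrpCat.of (S.obj b.unop →+ M)
  map f := AddCommGrpCat.ofHom
    { toFun := fun g => g.comp (S.map f.unop).hom
      map_zero' := rfl
      map_add' := fun g h => rfl }
  map_id b := by
    ext g y
    simp
  map_comp f g := by
    ext h y
    simp

instance homFunctor_additive (S : C ⥤ AddCommGrpCat) [S.Additive] (M : Type) [AddCommGroup M] :
    (homFunctor S M).Additive where
  map_add := by
    intro X Y f g
    ext h
    apply AddMonoidHom.ext
    intro y
    simp [homFunctor, AddMonoidHom.add_apply]
    exact map_add (show S.obj (unop X) →+ M from h) ((S.map f.unop).hom y) ((S.map g.unop).hom y)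

end HomFunctor

section Tensor
variable {C : Type} [SmallCategory C] [Preadditive C] [DecidableEq C]
variable (T : Cᵒᵖ ⥤ AddCommGrpCat) (S : C ⥤ AddCommGrpCat)

/-- The image of a pure tensor in the coend tensor product. -/
noncomputable def tmk (a : C) (x : T.obj (op a)) (y : S.obj a) : functorTensor T S :=
  QuotientAddGroup.mk' (tensorRel T S)
    (DirectSum.of (fun b : C => TensorProduct ℤ (T.obj (op b)) (S.obj b)) a (x ⊗ₜ[ℤ] y))

lemma tmk_rel {a a' : C} (α : a ⟶ a') (x : T.obj (op a')) (y : S.obj a) :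
    tmk T S a (T.map α.op x) y = tmk T S a' x (S.map α y) := by
  unfold tmk
  apply (QuotientAddGroup.mk'_eq_mk' (tensorRel T S)).mpr
  refine ⟨-(DirectSum.of (fun b : C => TensorProduct ℤ (T.obj (op b)) (S.obj b)) a
            (T.map α.op x ⊗ₜ[ℤ] y)
        - DirectSum.of (fun b : C => TensorProduct ℤ (T.obj (op b)) (S.obj b)) a'
            (x ⊗ₜ[ℤ] S.map α y)), ?_, by abel⟩
  exact neg_mem (AddSubgroup.subset_closure ⟨a, a', α, x, y, rfl⟩)

lemma tmk_add_left (a : C) (x x' : T.obj (op a)) (y : S.obj a) :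
    tmk T S a (x + x') y = tmk T S a x y + tmk T S a x' y := by
  unfold tmk; rw [TensorProduct.add_tmul, map_add, map_add]; rfl

lemma tmk_add_right (a : C) (x : T.obj (op a)) (y y' : S.obj a) :
    tmk T S a x (y + y') = tmk T S a x y + tmk T S a x y' := by
  unfold tmk; rw [TensorProduct.tmul_add, map_add, map_add]; rfl

lemma tmk_zero_left (a : C) (y : S.obj a) : tmk T S a 0 y = 0 := by
  unfold tmk; rw [TensorProduct.zero_tmul, map_zero, map_zero]; rfl

lemma tmk_zero_right (a : C) (x : T.obj (op a)) : tmk T S a x 0 = 0 := by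
  unfold tmk; rw [TensorProduct.tmul_zero, map_zero, map_zero]; rfl

variable (M : Type) [AddCommGroup M]

/-- The component of a natural transformation into the hom functor, as a biadditive map. -/
def appHom (η : T ⟶ homFunctor S M) (a : C) : T.obj (op a) →+ (S.obj a →+ M) :=
  (η.app (op a)).hom

lemma appHom_naturality (η : T ⟶ homFunctor S M) {a a' : C} (α : a ⟶ a')
    (x : T.obj (op a')) (y : S.obj a) :
    appHom T S M η a (T.map α.op x) y = appHom T S M η a' x (S.map α y) := by
  have h : (appHom T S M η a).comp (T.map α.op).hom
      = fun x => ((appHom T S M η a' x).comp (S.map α).hom) :=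
    congrArg (fun (g : T.obj (op a') ⟶ (homFunctor S M).obj (op a)) => (g.hom : _ → _))
      (η.naturality α.op)
  exact congrFun (congrArg (fun (g : S.obj a →+ M) => (g : _ → M)) (congrFun h x)) y

/-- Curry a hom out of the coend tensor product into a natural transformation. -/
noncomputable def natOfHom (f : functorTensor T S →+ M) : T ⟶ homFunctor S M where
  app b := AddCommGrpCat.ofHom
    { toFun := fun x =>
        { toFun := fun y => f (tmk T S b.unop x y)
          map_zero' := by
            show f (tmk T S b.unop x 0) = 0
            rw [tmk_zero_right, map_zero]
          map_add' := fun y y' => by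
            show f (tmk T S b.unop x (y + y')) = f (tmk T S b.unop x y) + f (tmk T S b.unop x y')
            rw [tmk_add_right, map_add] }
      map_zero' := by
        apply AddMonoidHom.ext; intro y
        simp only [AddMonoidHom.coe_mk, ZeroHom.coe_mk]
        rw [tmk_zero_left, map_zero]; rfl
      map_add' := fun x x' => by
        apply AddMonoidHom.ext; intro y
        simp only [AddMonoidHom.coe_mk, ZeroHom.coe_mk]
        rw [tmk_add_left, map_add]; rfl }
  naturality := by
    intro b b' g
    ext x
    apply AddMonoidHom.ext; intro y
    exact congrArg f (tmk_rel T S g.unop x y)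

lemma appHom_natOfHom (f : functorTensor T S →+ M) (a : C) (x : T.obj (op a)) (y : S.obj a) :
    appHom T S M (natOfHom T S M f) a x y = f (tmk T S a x y) := rfl

/-- The underlying hom on the direct sum, given a natural transformation. -/
noncomputable def homOfNatAux (η : T ⟶ homFunctor S M) :
    (⨁ a : C, TensorProduct ℤ (T.obj (op a)) (S.obj a)) →+ M :=
  DirectSum.toAddMonoid fun a =>
    TensorProduct.liftAddHom (appHom T S M η a)
      (by intro r x y; simp [map_zsmul])

lemma homOfNatAux_of (η : T ⟶ homFunctor S M) (a : C) (x : T.obj (op a)) (y : S.obj a) :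
    homOfNatAux T S M η
      (DirectSum.of (fun b : C => TensorProduct ℤ (T.obj (op b)) (S.obj b)) a (x ⊗ₜ[ℤ] y))
      = appHom T S M η a x y := by
  unfold homOfNatAux
  rw [DirectSum.toAddMonoid_of, TensorProduct.liftAddHom_tmul]

lemma homOfNatAux_ker (η : T ⟶ homFunctor S M) : tensorRel T S ≤ (homOfNatAux T S M η).ker := by
  rw [tensorRel, AddSubgroup.closure_le]
  rintro z ⟨a, a', α, x, y, rfl⟩
  simp only [SetLike.mem_coe, AddMonoidHom.mem_ker, map_sub, homOfNatAux_of]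
  rw [appHom_naturality, sub_self]

/-- Descend to the quotient. -/
noncomputable def homOfNat (η : T ⟶ homFunctor S M) : functorTensor T S →+ M :=
  QuotientAddGroup.lift _ (homOfNatAux T S M η) (homOfNatAux_ker T S M η)

lemma homOfNat_tmk (η : T ⟶ homFunctor S M) (a : C) (x : T.obj (op a)) (y : S.obj a) :
    homOfNat T S M η (tmk T S a x y) = appHom T S M η a x y :=
  homOfNatAux_of T S M η a x y

/-- The universal property of the coend tensor product. -/
noncomputable def tensorHomEquiv : (functorTensor T S →+ M) ≃ (T ⟶ homFunctor S M) where
  toFun := natOfHom T S M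
  invFun := homOfNat T S M
  left_inv f := by
    have key : homOfNatAux T S M (natOfHom T S M f)
        = f.comp (QuotientAddGroup.mk' (tensorRel T S)) := by
      refine DirectSum.addHom_ext fun a t => ?_
      induction t using TensorProduct.induction_on with
      | zero => simp
      | tmul x y =>
        rw [homOfNatAux_of]
        rfl
      | add u v hu hv =>
        simp only [map_add, hu, hv]
    apply AddMonoidHom.ext; intro q
    induction q using QuotientAddGroup.induction_on with
    | H z => exact congrFun (congrArg (fun (g : _ →+ M) => (g : _ → M)) key) z
  right_inv η := by
    apply NatTrans.ext
    funext b
    ext x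
    apply AddMonoidHom.ext; intro y
    exact homOfNat_tmk T S M η b.unop x y
  
/-- Postcomposition with `k`, as an additive map on hom groups. -/
def compHomHom {X M N : Type} [AddCommMonoid X] [AddCommMonoid M] [AddCommMonoid N]
    (k : M →+ N) : (X →+ M) →+ (X →+ N) where
  toFun g := k.comp g
  map_zero' := by apply AddMonoidHom.ext; intro y; simp
  map_add' g h := by
    apply AddMonoidHom.ext; intro y
    exact map_add k (g y) (h y)

/-- Postcomposition natural transformation on hom functors. -/
def postcompNat {M N : Type} [AddCommGroup M] [AddCommGroup N] (k : M →+ N) :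
    homFunctor S M ⟶ homFunctor S N where
  app b := AddCommGrpCat.ofHom (compHomHom k : ((S.obj b.unop) →+ M) →+ ((S.obj b.unop) →+ N))
  naturality := by
    intro b b' g
    ext h y
    rfl

lemma tensorHomEquiv_natural {N : Type} [AddCommGroup N] (k : M →+ N)
    (f : functorTensor T S →+ M) :
    tensorHomEquiv T S N (k.comp f) = tensorHomEquiv T S M f ≫ postcompNat S k := by
  apply NatTrans.ext
  funext b
  ext x y
  rfl

lemma tensorHomEquiv_symm_natural {N : Type} [AddCommGroup N] (k : M →+ N)
    (η : T ⟶ homFunctor S M) :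
    (tensorHomEquiv T S N).symm (η ≫ postcompNat S k)
      = k.comp ((tensorHomEquiv T S M).symm η) := by
  apply (tensorHomEquiv T S N).injective
  rw [Equiv.apply_symm_apply, tensorHomEquiv_natural, Equiv.apply_symm_apply]

end Tensor

/-- A family of equivalences on hom groups natural in the target yields an isomorphism. -/
noncomputable def addEquivOfNatHomEquiv {X Y : Type} [AddCommGroup X] [AddCommGroup Y]
    (e : (M : Type) → [inst : AddCommGroup M] → ((X →+ M) ≃ (Y →+ M)))
    (nat : ∀ (M N : Type) [AddCommGroup M] [AddCommGroup N] (k : M →+ N) (h : X →+ M),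
      e N (k.comp h) = k.comp (e M h)) : X ≃+ Y := by
  let φ : X →+ Y := (e Y).symm (AddMonoidHom.id Y)
  let ψ : Y →+ X := e X (AddMonoidHom.id X)
  have hφ : e Y φ = AddMonoidHom.id Y := Equiv.apply_symm_apply _ _
  have h1 : φ.comp ψ = AddMonoidHom.id Y := by
    have := nat X Y φ (AddMonoidHom.id X)
    rw [AddMonoidHom.comp_id] at this
    rw [hφ] at this
    exact this.symm
  have h2 : ψ.comp φ = AddMonoidHom.id X := by
    apply (e X).injective
    have := nat Y X ψ φ
    rw [hφ, AddMonoidHom.comp_id] at this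
    rw [this]
  exact
    { toFun := φ
      invFun := ψ
      left_inv := fun x => DFunLike.congr_fun h2 x
      right_inv := fun y => DFunLike.congr_fun h1 y
      map_add' := φ.map_add }

section Main
variable {A B : Type} [SmallCategory A] [SmallCategory B]
    [Preadditive A] [Preadditive B] [DecidableEq A] [DecidableEq B]
    (F : A ⥤ B) [F.Additive]
    (L : (Aᵒᵖ ⥤+ AddCommGrpCat) ⥤ (Bᵒᵖ ⥤+ AddCommGrpCat))
    (adj : L ⊣ restrictAdditive F)
    (T : Aᵒᵖ ⥤+ AddCommGrpCat) (S : B ⥤ AddCommGrpCat) [S.Additive]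

/-- The hom functor as an additive functor. -/
def homFunctorAdd (M : Type) [AddCommGroup M] : Bᵒᵖ ⥤+ AddCommGrpCat :=
  ⟨homFunctor S M, homFunctor_additive S M⟩

-- key defeq checks
example (M : Type) [AddCommGroup M] :
    ((restrictAdditive F).obj (homFunctorAdd S M)).obj = homFunctor (F ⋙ S) M := rfl

noncomputable def eFam (M : Type) [AddCommGroup M] :
    (functorTensor (L.obj T).obj S →+ M) ≃ (functorTensor T.obj (F ⋙ S) →+ M) :=
  (tensorHomEquiv (L.obj T).obj S M).trans
    ((InducedCategory.homEquiv.symm.trans ((adj.homEquiv T (homFunctorAdd S M)).trans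
          InducedCategory.homEquiv) :
        ((L.obj T).obj ⟶ homFunctor S M) ≃ (T.obj ⟶ homFunctor (F ⋙ S) M)).trans
      (tensorHomEquiv T.obj (F ⋙ S) M).symm)

lemma restrict_map_postcomp {M N : Type} [AddCommGroup M] [AddCommGroup N] (k : M →+ N) :
    ((restrictAdditive F).map
        (show homFunctorAdd S M ⟶ homFunctorAdd S N from ObjectProperty.homMk (postcompNat S k))).hom
      = (show ((restrictAdditive F).obj (homFunctorAdd S M)).obj ⟶
              ((restrictAdditive F).obj (homFunctorAdd S N)).obj
          from postcompNat (F ⋙ S) k) := rfl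

set_option maxHeartbeats 1000000 in
lemma eFam_natural (M N : Type) [AddCommGroup M] [AddCommGroup N] (k : M →+ N)
    (h : functorTensor (L.obj T).obj S →+ M) :
    eFam F L adj T S N (k.comp h) = k.comp (eFam F L adj T S M h) := by
  show (tensorHomEquiv T.obj (F ⋙ S) N).symm
      (adj.homEquiv T (homFunctorAdd S N)
        (ObjectProperty.homMk (tensorHomEquiv (L.obj T).obj S N (k.comp h)))).hom
    = k.comp ((tensorHomEquiv T.obj (F ⋙ S) M).symm
      (adj.homEquiv T (homFunctorAdd S M)
        (ObjectProperty.homMk (tensorHomEquiv (L.obj T).obj S M h))).hom)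
  rw [tensorHomEquiv_natural]
  have hmid := Adjunction.homEquiv_naturality_right adj
    (show L.obj T ⟶ homFunctorAdd S M from ObjectProperty.homMk (tensorHomEquiv (L.obj T).obj S M h))
    (show homFunctorAdd S M ⟶ homFunctorAdd S N from ObjectProperty.homMk (postcompNat S k))
  refine Eq.trans (congrArg (tensorHomEquiv T.obj (F ⋙ S) N).symm ?_)
    (tensorHomEquiv_symm_natural T.obj (F ⋙ S) M k
      (adj.homEquiv T (homFunctorAdd S M)
        (ObjectProperty.homMk (tensorHomEquiv (L.obj T).obj S M h))).hom)
  exact congrArg InducedCategory.Hom.hom hmid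

include adj in
theorem lan_tensor_iso_aux :
    Nonempty (functorTensor (L.obj T).obj S ≃+ functorTensor T.obj (F ⋙ S)) :=
  ⟨addEquivOfNatHomEquiv (fun M [AddCommGroup M] => eFam F L adj T S M)
    (fun M N [AddCommGroup M] [AddCommGroup N] k h => eFam_natural F L adj T S M N k h)⟩

end Main

/-- `(F_* T) ⊗_B S ≅ T ⊗_A (F* S)`: for any left adjoint `L` of the restriction `F*` (a model
of the left Kan extension `F_*`), a contravariant additive functor `T` on `A` and a covariant
additive functor `S` on `B`, the coend tensor product of `F_* T` with `S` over `B` is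
isomorphic to that of `T` with `F* S = S ∘ F` over `A`. -/
theorem lan_tensor_iso {A B : Type} [SmallCategory A] [SmallCategory B]
    [Preadditive A] [Preadditive B] [DecidableEq A] [DecidableEq B]
    (F : A ⥤ B) [F.Additive]
    (L : (Aᵒᵖ ⥤+ AddCommGrpCat) ⥤ (Bᵒᵖ ⥤+ AddCommGrpCat))
    (adj : L ⊣ restrictAdditive F)
    (T : Aᵒᵖ ⥤+ AddCommGrpCat) (S : B ⥤ AddCommGrpCat) [S.Additive] :
    Nonempty (functorTensor (L.obj T).obj S ≃+ functorTensor T.obj (F ⋙ S)) :=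
  lan_tensor_iso_aux F L adj T S
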